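/- Let X and Y be finite types and ε ≥ 0 a real. Let q, q̂, s, ŝ : X × Y → ℝ be nonnegative functions such that: (i) (1−ε)·s(x,y) ≤ ŝ(x,y) ≤ (1+ε)·s(x,y) for all (x,y); (ii) for every x ∈ X, ∑_{y ∈ Y} |q(x,y) − q̂(x,y)| ≤ ε; (iii) ∑_{(x,y)} q(x,y)·s(x,y) ≤ 1; and (iv) ŝ(x,y) ≤ 1 for all (x,y). Then ∑_{(x,y)} |q(x,y)·s(x,y) − q̂(x,y)·ŝ(x,y)| ≤ ε·(1 + |X|). -/
import Mathlib


theorem stmt_3 {X Y : Type*} [Fintype X] [Fintype Y] (ε : ℝ) (hε : 0 ≤ ε)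
    (q qhat s shat : X × Y → ℝ)
    (hq : ∀ xy, 0 ≤ q xy) (hqhat : ∀ xy, 0 ≤ qhat xy)
    (hs : ∀ xy, 0 ≤ s xy) (hshat : ∀ xy, 0 ≤ shat xy)
    (h1 : ∀ xy, (1 - ε) * s xy ≤ shat xy ∧ shat xy ≤ (1 + ε) * s xy)
    (h2 : ∀ x : X, ∑ y : Y, |q (x, y) - qhat (x, y)| ≤ ε)
    (h3 : ∑ xy : X × Y, q xy * s xy ≤ 1)
    (h4 : ∀ xy, shat xy ≤ 1) :
    ∑ xy : X × Y, |q xy * s xy - qhat xy * shat xy| ≤ ε * (1 + Fintype.card X) := by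
  have key : ∀ xy : X × Y, |q xy * s xy - qhat xy * shat xy| ≤
      ε * (q xy * s xy) + |q xy - qhat xy| := by
    intro xy
    have h1' := h1 xy
    have hsb : |s xy - shat xy| ≤ ε * s xy := by
      rw [abs_sub_le_iff]; constructor <;> nlinarith [h1'.1, h1'.2]
    calc |q xy * s xy - qhat xy * shat xy|
        = |q xy * (s xy - shat xy) + (q xy - qhat xy) * shat xy| := by ring_nf
      _ ≤ |q xy * (s xy - shat xy)| + |(q xy - qhat xy) * shat xy| := abs_add_le _ _
      _ ≤ ε * (q xy * s xy) + |q xy - qhat xy| := by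
          rw [abs_mul, abs_mul, abs_of_nonneg (hq xy), abs_of_nonneg (hshat xy)]
          have := hsb
          nlinarith [abs_nonneg (q xy - qhat xy), hq xy, h4 xy, hshat xy]
  have hA : ∑ xy : X × Y, |q xy - qhat xy| ≤ ε * Fintype.card X := by
    rw [Fintype.sum_prod_type]
    calc ∑ x : X, ∑ y : Y, |q (x, y) - qhat (x, y)| ≤ ∑ _x : X, ε :=
          Finset.sum_le_sum fun x _ => h2 x
      _ = ε * Fintype.card X := by simp [Finset.sum_const, mul_comm]
  have hB : ε * ∑ xy : X × Y, q xy * s xy ≤ ε * 1 := by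
    exact mul_le_mul_of_nonneg_left h3 hε
  calc ∑ xy : X × Y, |q xy * s xy - qhat xy * shat xy|
      ≤ ∑ xy : X × Y, (ε * (q xy * s xy) + |q xy - qhat xy|) :=
        Finset.sum_le_sum fun xy _ => key xy
    _ = ε * ∑ xy : X × Y, q xy * s xy + ∑ xy : X × Y, |q xy - qhat xy| := by
        rw [Finset.sum_add_distrib, Finset.mul_sum]
    _ ≤ ε * 1 + ε * Fintype.card X := add_le_add hB hA
    _ = ε * (1 + Fintype.card X) := by ring
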